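/- Let p = n^{−α} with α ∈ (3/2, 2). Then with probability tending to 1 as n → ∞, all minimal vertex covers of the Erdős–Rényi random graph G(n,p) have the same cardinality. (Equivalently, the random edge ideal I(n,p) is unmixed with high probability.) -/

import Mathlib

open Filter Finset

/-- Probability weight of a given graph `G` under the Erdős–Rényi model `G(n,p)`:
each of the `n.choose 2` possible edges is present independently with probability `p`. -/
noncomputable def graphWeight (n : ℕ) (p : ℝ) (G : SimpleGraph (Fin n)) : ℝ :=
  p ^ Nat.card G.edgeSet * (1 - p) ^ (n.choose 2 - Nat.card G.edgeSet)

/-- Probability of the event `A` under the Erdős–Rényi random graph `G(n,p)`. -/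
noncomputable def erProb (n : ℕ) (p : ℝ) (A : Set (SimpleGraph (Fin n))) : ℝ :=
  ∑ G : SimpleGraph (Fin n), A.indicator (graphWeight n p) G

/-- A set of vertices `C` is a vertex cover of `G` if every edge of `G` has an
endpoint in `C`. -/
def IsVertexCover {V : Type} (G : SimpleGraph V) (C : Set V) : Prop :=
  ∀ ⦃u w : V⦄, G.Adj u w → u ∈ C ∨ w ∈ C

/-- A vertex cover is minimal if no proper subset of it is a vertex cover. -/
def IsMinimalVertexCover {V : Type} (G : SimpleGraph V) (C : Set V) : Prop :=
  IsVertexCover G C ∧ ∀ D : Set V, D ⊂ C → ¬IsVertexCover G D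

/-- All minimal vertex covers of `G` have the same cardinality (equivalently, the
edge ideal of `G` is unmixed). -/
def Unmixed {V : Type} (G : SimpleGraph V) : Prop :=
  ∀ C D : Set V, IsMinimalVertexCover G C → IsMinimalVertexCover G D → C.ncard = D.ncard

variable {β : Type*} [DecidableEq β]

lemma sum_powerset_weight (p : ℝ) (E : Finset β) :
    ∑ t ∈ E.powerset, p ^ t.card * (1 - p) ^ (E.card - t.card) = 1 := by
  have h := Finset.prod_add (fun _ : β => p) (fun _ : β => (1 - p)) E
  simp only [Finset.prod_const] at h
  have h2 : ∀ t ∈ E.powerset, p ^ t.card * (1-p) ^ (E \ t).card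
      = p ^ t.card * (1-p) ^ (E.card - t.card) := by
    intro t ht
    rw [Finset.card_sdiff_of_subset (Finset.mem_powerset.mp ht)]
  rw [Finset.sum_congr rfl h2] at h
  rw [← h]
  simp

lemma sum_powerset_weight_filter (p : ℝ) (E s : Finset β) (hs : s ⊆ E) :
    ∑ t ∈ E.powerset.filter (fun t => s ⊆ t), p ^ t.card * (1 - p) ^ (E.card - t.card)
      = p ^ s.card := by
  rw [show E.powerset.filter (fun t => s ⊆ t)
      = ((E \ s).powerset).image (fun u => s ∪ u) from ?_]
  · rw [Finset.sum_image ?inj]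
    case inj =>
      intro u hu v hv huv
      have hu' := Finset.mem_powerset.mp hu
      have hv' := Finset.mem_powerset.mp hv
      ext a
      constructor <;> intro ha
      · have : a ∈ s ∪ v := (show s ∪ u = s ∪ v from huv) ▸ (Finset.mem_union_right _ ha)
        rcases Finset.mem_union.mp this with h | h
        · exact absurd (hu' ha) (by simp [h])
        · exact h
      · have : a ∈ s ∪ u := (show s ∪ u = s ∪ v from huv) ▸ (Finset.mem_union_right _ ha)
        rcases Finset.mem_union.mp this with h | h
        · exact absurd (hv' ha) (by simp [h])
        · exact h
    have key : ∀ u ∈ (E \ s).powerset,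
        p ^ (s ∪ u).card * (1-p) ^ (E.card - (s ∪ u).card)
          = p ^ s.card * (p ^ u.card * (1-p) ^ ((E\s).card - u.card)) := by
      intro u hu
      have hu' := Finset.mem_powerset.mp hu
      have hdisj : Disjoint s u := by
        refine Finset.disjoint_left.mpr fun a ha hau => ?_
        exact (Finset.mem_sdiff.mp (hu' hau)).2 ha
      rw [Finset.card_union_of_disjoint hdisj, Finset.card_sdiff_of_subset hs, pow_add, mul_assoc]
      congr 3
      omega
    rw [Finset.sum_congr rfl key, ← Finset.mul_sum, sum_powerset_weight, mul_one]
  · ext t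
    simp only [Finset.mem_filter, Finset.mem_powerset, Finset.mem_image]
    constructor
    · rintro ⟨htE, hst⟩
      exact ⟨t \ s, Finset.sdiff_subset_sdiff htE le_rfl,
        by rw [Finset.union_sdiff_of_subset hst]⟩
    · rintro ⟨u, hu, rfl⟩
      exact ⟨Finset.union_subset hs (hu.trans (Finset.sdiff_subset)),
        Finset.subset_union_left⟩


noncomputable def EF {n : ℕ} (G : SimpleGraph (Fin n)) : Finset (Sym2 (Fin n)) :=
  G.edgeSet.toFinite.toFinset

lemma mem_EF {n : ℕ} {G : SimpleGraph (Fin n)} {e : Sym2 (Fin n)} :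
    e ∈ EF G ↔ e ∈ G.edgeSet := Set.Finite.mem_toFinset _

lemma EF_card {n : ℕ} (G : SimpleGraph (Fin n)) : Nat.card G.edgeSet = (EF G).card := by
  rw [Nat.card_coe_set_eq, Set.ncard_eq_toFinset_card _ (Set.toFinite _)]; rfl

lemma EF_top_card (n : ℕ) : (EF (⊤ : SimpleGraph (Fin n))).card = n.choose 2 := by
  classical
  rw [show EF (⊤ : SimpleGraph (Fin n)) = (⊤ : SimpleGraph (Fin n)).edgeFinset from
    Set.Finite.toFinset_eq_toFinset _]
  simpa using SimpleGraph.card_edgeFinset_top_eq_card_choose_two (V := Fin n)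

lemma graphWeight_eq {n : ℕ} (p : ℝ) (G : SimpleGraph (Fin n)) :
    graphWeight n p G = p ^ (EF G).card * (1 - p) ^ (n.choose 2 - (EF G).card) := by
  rw [graphWeight, EF_card]

lemma graph_sum_transfer (n : ℕ) (f : Finset (Sym2 (Fin n)) → ℝ) :
    ∑ G : SimpleGraph (Fin n), f (EF G)
      = ∑ t ∈ (EF (⊤ : SimpleGraph (Fin n))).powerset, f t := by
  classical
  refine Finset.sum_nbij' (i := fun G => EF G)
    (j := fun t => SimpleGraph.fromEdgeSet (↑t : Set (Sym2 (Fin n)))) ?_ ?_ ?_ ?_ ?_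
  · intro G _
    rw [Finset.mem_powerset]
    intro e he
    rw [mem_EF] at he ⊢
    exact (SimpleGraph.edgeSet_mono le_top) he
  · intro t _
    exact Finset.mem_univ _
  · intro G _
    have : (↑(EF G) : Set (Sym2 (Fin n))) = G.edgeSet := Set.Finite.coe_toFinset _
    show SimpleGraph.fromEdgeSet (↑(EF G)) = G
    rw [this, SimpleGraph.fromEdgeSet_edgeSet]
  · intro t ht
    rw [Finset.mem_powerset] at ht
    ext e
    rw [mem_EF, SimpleGraph.edgeSet_fromEdgeSet, Set.mem_diff]
    constructor
    · rintro ⟨he, _⟩; exact_mod_cast he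
    · intro he
      have hnd : ¬ e.IsDiag := by
        have := mem_EF.mp (ht he)
        rw [SimpleGraph.edgeSet_top] at this
        exact this
      exact ⟨by exact_mod_cast he, hnd⟩
  · intro G _; rfl

lemma sum_graphWeight (n : ℕ) (p : ℝ) :
    ∑ G : SimpleGraph (Fin n), graphWeight n p G = 1 := by
  have h := graph_sum_transfer n
    (fun t => p ^ t.card * (1 - p) ^ (n.choose 2 - t.card))
  calc ∑ G : SimpleGraph (Fin n), graphWeight n p G
      = ∑ G : SimpleGraph (Fin n),
          p ^ (EF G).card * (1 - p) ^ (n.choose 2 - (EF G).card) := by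
        exact Finset.sum_congr rfl fun G _ => graphWeight_eq p G
    _ = ∑ t ∈ (EF (⊤ : SimpleGraph (Fin n))).powerset,
          p ^ t.card * (1 - p) ^ (n.choose 2 - t.card) := h
    _ = 1 := by rw [← EF_top_card n]; exact sum_powerset_weight p _

lemma erProb_pair (n : ℕ) (p : ℝ) (e f : Sym2 (Fin n))
    (he : e ∈ EF (⊤ : SimpleGraph (Fin n))) (hf : f ∈ EF (⊤ : SimpleGraph (Fin n)))
    (hef : e ≠ f) :
    erProb n p {G | e ∈ G.edgeSet ∧ f ∈ G.edgeSet} = p ^ 2 := by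
  classical
  have h := graph_sum_transfer n
    (fun t => if ({e, f} : Finset (Sym2 (Fin n))) ⊆ t then
      p ^ t.card * (1 - p) ^ (n.choose 2 - t.card) else 0)
  calc erProb n p {G | e ∈ G.edgeSet ∧ f ∈ G.edgeSet}
      = ∑ G : SimpleGraph (Fin n),
          (if ({e, f} : Finset (Sym2 (Fin n))) ⊆ EF G then
            p ^ (EF G).card * (1 - p) ^ (n.choose 2 - (EF G).card) else 0) := by
        refine Finset.sum_congr rfl fun G _ => ?_
        rw [Set.indicator_apply]
        have : G ∈ {G : SimpleGraph (Fin n) | e ∈ G.edgeSet ∧ f ∈ G.edgeSet}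
            ↔ ({e, f} : Finset (Sym2 (Fin n))) ⊆ EF G := by
          simp [Finset.insert_subset_iff, mem_EF, Set.mem_setOf_eq]
        rw [if_congr this rfl rfl, graphWeight_eq]
    _ = ∑ t ∈ (EF (⊤ : SimpleGraph (Fin n))).powerset,
          (if ({e, f} : Finset (Sym2 (Fin n))) ⊆ t then
            p ^ t.card * (1 - p) ^ (n.choose 2 - t.card) else 0) := h
    _ = p ^ 2 := by
        rw [← Finset.sum_filter, ← EF_top_card n, sum_powerset_weight_filter p _ _
          (by intro x hx; rcases Finset.mem_insert.mp hx with rfl | hx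
              · exact he
              · rw [Finset.mem_singleton] at hx; exact hx ▸ hf)]
        rw [Finset.card_insert_of_notMem (by simpa using hef), Finset.card_singleton]

section Part3
variable {n : ℕ} {p : ℝ}

lemma graphWeight_nonneg (hp0 : 0 ≤ p) (hp1 : p ≤ 1) (G : SimpleGraph (Fin n)) :
    0 ≤ graphWeight n p G :=
  mul_nonneg (pow_nonneg hp0 _) (pow_nonneg (by linarith) _)

lemma erProb_mono (hp0 : 0 ≤ p) (hp1 : p ≤ 1) {A B : Set (SimpleGraph (Fin n))}
    (h : A ⊆ B) : erProb n p A ≤ erProb n p B := by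
  refine Finset.sum_le_sum fun G _ => ?_
  by_cases hG : G ∈ A
  · rw [Set.indicator_of_mem hG, Set.indicator_of_mem (h hG)]
  · rw [Set.indicator_of_notMem hG]
    exact Set.indicator_nonneg (fun G _ => graphWeight_nonneg hp0 hp1 G) G

lemma erProb_add_compl (A : Set (SimpleGraph (Fin n))) :
    erProb n p A + erProb n p Aᶜ = 1 := by
  rw [erProb, erProb, ← Finset.sum_add_distrib]
  have : ∀ G : SimpleGraph (Fin n),
      A.indicator (graphWeight n p) G + Aᶜ.indicator (graphWeight n p) G
        = graphWeight n p G := fun G =>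
    congrFun (Set.indicator_self_add_compl A (graphWeight n p)) G
  rw [Finset.sum_congr rfl fun G _ => this G, sum_graphWeight]

lemma erProb_biUnion_le {ι : Type*} [DecidableEq ι] (hp0 : 0 ≤ p) (hp1 : p ≤ 1)
    (I : Finset ι) (A : ι → Set (SimpleGraph (Fin n))) :
    erProb n p (⋃ i ∈ I, A i) ≤ ∑ i ∈ I, erProb n p (A i) := by
  rw [erProb]
  have key : ∀ G : SimpleGraph (Fin n),
      (⋃ i ∈ I, A i).indicator (graphWeight n p) G
        ≤ ∑ i ∈ I, (A i).indicator (graphWeight n p) G := by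
    intro G
    by_cases hG : G ∈ ⋃ i ∈ I, A i
    · rw [Set.indicator_of_mem hG]
      obtain ⟨i, hi, hGi⟩ := Set.mem_iUnion₂.mp hG
      have h1 : graphWeight n p G = (A i).indicator (graphWeight n p) G :=
        (Set.indicator_of_mem hGi _).symm
      rw [h1]
      exact Finset.single_le_sum
        (fun j _ => Set.indicator_nonneg (fun G _ => graphWeight_nonneg hp0 hp1 G) G) hi
    · rw [Set.indicator_of_notMem hG]
      exact Finset.sum_nonneg fun j _ =>
        Set.indicator_nonneg (fun G _ => graphWeight_nonneg hp0 hp1 G) G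
  calc ∑ G : SimpleGraph (Fin n), (⋃ i ∈ I, A i).indicator (graphWeight n p) G
      ≤ ∑ G : SimpleGraph (Fin n), ∑ i ∈ I, (A i).indicator (graphWeight n p) G :=
        Finset.sum_le_sum fun G _ => key G
    _ = ∑ i ∈ I, erProb n p (A i) := Finset.sum_comm

/-- If every vertex has at most one neighbor, all minimal vertex covers have the
same cardinality. -/
lemma matching_unmixed (G : SimpleGraph (Fin n))
    (h : ∀ v u w : Fin n, G.Adj v u → G.Adj v w → u = w) : Unmixed G := by
  classical
  suffices key : ∀ C : Set (Fin n), IsMinimalVertexCover G C → C.ncard = G.edgeSet.ncard by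
    intro C D hC hD
    rw [key C hC, key D hD]
  intro C hC
  -- each element of C has a neighbor
  have hnbr : ∀ c ∈ C, ∃ w, G.Adj c w := by
    intro c hc
    by_contra hno
    push_neg at hno
    refine hC.2 (C \ {c}) ⟨Set.diff_subset, fun hsub => ?_⟩ ?_
    · exact (hsub hc).2 rfl
    · intro u w huw
      rcases hC.1 huw with hu | hw
      · refine Or.inl ⟨hu, ?_⟩
        rintro rfl
        exact hno w huw
      · refine Or.inr ⟨hw, ?_⟩
        rintro rfl
        exact hno u huw.symm
  -- the function sending a cover vertex to its unique edge
  set f : Fin n → Sym2 (Fin n) :=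
    fun v => if hv : ∃ w, G.Adj v w then s(v, hv.choose) else s(v, v) with hf
  have hmem : ∀ c ∈ C, f c ∈ G.edgeSet := by
    intro c hc
    show (if hv : ∃ w, G.Adj c w then s(c, hv.choose) else s(c, c)) ∈ G.edgeSet
    rw [dif_pos (hnbr c hc)]
    exact (hnbr c hc).choose_spec
  have hinj : Set.InjOn f C := by
    intro c hc c' hc' hcc'
    by_contra hne
    have hcc2 : s(c, (hnbr c hc).choose) = s(c', (hnbr c' hc').choose) := by
      have e1 : f c = s(c, (hnbr c hc).choose) := dif_pos (hnbr c hc)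
      have e2 : f c' = s(c', (hnbr c' hc').choose) := dif_pos (hnbr c' hc')
      rw [← e1, ← e2, hcc']
    have hadj_c := (hnbr c hc).choose_spec
    have hadj_c' := (hnbr c' hc').choose_spec
    rw [Sym2.eq_iff] at hcc2
    rcases hcc2 with ⟨h1, _⟩ | ⟨h1, h2⟩
    · exact hne h1
    -- c = choose c', choose c = c', so Adj c c'
    have hadj : G.Adj c c' := h2 ▸ hadj_c
    -- remove c from C; still a cover
    refine hC.2 (C \ {c}) ⟨Set.diff_subset, fun hsub => (hsub hc).2 rfl⟩ ?_
    intro u w huw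
    rcases hC.1 huw with hu | hw
    · by_cases huc : u = c
      · subst huc
        have : w = c' := by
          have hwc : w = (hnbr u hu).choose := h u _ _ huw (hnbr u hu).choose_spec
          rw [hwc, ← h2]
        refine Or.inr ⟨this ▸ hc', ?_⟩
        rw [this]
        rintro rfl
        exact hne rfl
      · exact Or.inl ⟨hu, huc⟩
    · by_cases hwc : w = c
      · subst hwc
        have : u = c' := by
          have : u = (hnbr w hw).choose := h w _ _ huw.symm (hnbr w hw).choose_spec
          rw [this, ← h2]
        refine Or.inl ⟨this ▸ hc', ?_⟩
        rw [this]
        rintro rfl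
        exact hne rfl
      · exact Or.inr ⟨hw, hwc⟩
  have hsurj : G.edgeSet ⊆ f '' C := by
    intro e he
    induction e with
    | _ u w =>
      have hadj : G.Adj u w := he
      have haux : ∀ a b : Fin n, G.Adj a b → a ∈ C → s(a, b) ∈ f '' C := by
        intro a b hab ha
        refine ⟨a, ha, ?_⟩
        show (if hv : ∃ w, G.Adj a w then s(a, hv.choose) else s(a, a)) = s(a, b)
        rw [dif_pos (hnbr a ha)]
        rw [h a _ _ (hnbr a ha).choose_spec hab]
      rcases hC.1 hadj with hu | hw
      · exact haux u w hadj hu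
      · rw [Sym2.eq_swap]
        exact haux w u hadj.symm hw
  have himg : f '' C = G.edgeSet :=
    Set.Subset.antisymm (fun e ⟨c, hc, hce⟩ => hce ▸ hmem c hc) hsurj
  rw [← himg, Set.ncard_image_of_injOn hinj]

end Part3

lemma erProb_nonneg {n : ℕ} {p : ℝ} (hp0 : 0 ≤ p) (hp1 : p ≤ 1)
    (A : Set (SimpleGraph (Fin n))) : 0 ≤ erProb n p A :=
  Finset.sum_nonneg fun G _ =>
    Set.indicator_nonneg (fun G _ => graphWeight_nonneg hp0 hp1 G) G

lemma erProb_bad_le (n : ℕ) (p : ℝ) (hp0 : 0 ≤ p) (hp1 : p ≤ 1) :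
    erProb n p {G | ¬ ∀ v u w : Fin n, G.Adj v u → G.Adj v w → u = w}
      ≤ (n : ℝ) ^ 3 * p ^ 2 := by
  classical
  set A : Fin n × Fin n × Fin n → Set (SimpleGraph (Fin n)) :=
    fun x => {G | s(x.1, x.2.1) ∈ G.edgeSet ∧ s(x.1, x.2.2) ∈ G.edgeSet} with hA
  set T : Finset (Fin n × Fin n × Fin n) :=
    Finset.univ.filter (fun x => x.1 ≠ x.2.1 ∧ x.1 ≠ x.2.2 ∧ x.2.1 ≠ x.2.2) with hT
  have hsub : {G : SimpleGraph (Fin n) | ¬ ∀ v u w : Fin n,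
      G.Adj v u → G.Adj v w → u = w} ⊆ ⋃ x ∈ T, A x := by
    intro G hG
    rw [Set.mem_setOf_eq] at hG
    push_neg at hG
    obtain ⟨v, u, w, hvu, hvw, huw⟩ := hG
    refine Set.mem_iUnion₂.mpr ⟨(v, u, w), ?_, ?_⟩
    · rw [hT, Finset.mem_filter]
      exact ⟨Finset.mem_univ _, hvu.ne, hvw.ne, huw⟩
    · exact ⟨hvu, hvw⟩
  have hpair : ∀ x ∈ T, erProb n p (A x) = p ^ 2 := by
    intro x hx
    rw [hT, Finset.mem_filter] at hx
    obtain ⟨-, h12, h13, h23⟩ := hx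
    refine erProb_pair n p _ _ ?_ ?_ ?_
    · rw [mem_EF, SimpleGraph.edgeSet_top]
      simpa using h12
    · rw [mem_EF, SimpleGraph.edgeSet_top]
      simpa using h13
    · intro heq
      rw [Sym2.eq_iff] at heq
      rcases heq with ⟨-, h⟩ | ⟨h, h'⟩
      · exact h23 h
      · exact h13 h
  calc erProb n p {G : SimpleGraph (Fin n) | ¬ ∀ v u w : Fin n,
        G.Adj v u → G.Adj v w → u = w}
      ≤ erProb n p (⋃ x ∈ T, A x) := erProb_mono hp0 hp1 hsub
    _ ≤ ∑ x ∈ T, erProb n p (A x) := erProb_biUnion_le hp0 hp1 T A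
    _ = T.card * p ^ 2 := by
        rw [Finset.sum_congr rfl hpair, Finset.sum_const, nsmul_eq_mul]
    _ ≤ (n : ℝ) ^ 3 * p ^ 2 := by
        refine mul_le_mul_of_nonneg_right ?_ (sq_nonneg p)
        have : T.card ≤ n ^ 3 := by
          calc T.card ≤ (Finset.univ : Finset (Fin n × Fin n × Fin n)).card :=
              Finset.card_le_card (Finset.filter_subset _ _)
            _ = n ^ 3 := by simp [pow_succ, mul_assoc]
        exact_mod_cast this


/-- For `p = n^{-α}` with `α ∈ (3/2, 2)`, with high probability all minimal vertex
covers of `G(n,p)` have the same cardinality, i.e. the random edge ideal `I(n,p)` is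
unmixed. -/
theorem unmixed_whp_sparse (α : ℝ) (h1 : 3 / 2 < α) (h2 : α < 2) :
    Tendsto (fun n : ℕ => erProb n ((n : ℝ) ^ (-α)) {G | Unmixed G}) atTop (nhds 1) := by
  have hkey : ∀ n : ℕ, 1 ≤ n →
      1 - (n : ℝ) ^ (3 - 2 * α) ≤ erProb n ((n : ℝ) ^ (-α)) {G | Unmixed G} ∧
      erProb n ((n : ℝ) ^ (-α)) {G | Unmixed G} ≤ 1 := by
    intro n hn
    have hn0 : (0 : ℝ) < n := by exact_mod_cast hn
    set p := (n : ℝ) ^ (-α) with hp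
    have hp0 : 0 ≤ p := Real.rpow_nonneg hn0.le _
    have hp1 : p ≤ 1 :=
      Real.rpow_le_one_of_one_le_of_nonpos (by exact_mod_cast hn) (by linarith)
    have hcompl := erProb_add_compl (n := n) (p := p) {G | Unmixed G}
    constructor
    · have hsub : ({G : SimpleGraph (Fin n) | Unmixed G})ᶜ ⊆
          {G : SimpleGraph (Fin n) | ¬ ∀ v u w : Fin n,
            G.Adj v u → G.Adj v w → u = w} := by
        intro G hG
        exact fun hall => hG (matching_unmixed G hall)
      have hb := (erProb_mono hp0 hp1 hsub).trans (erProb_bad_le n p hp0 hp1)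
      have heq : (n : ℝ) ^ 3 * p ^ 2 = (n : ℝ) ^ (3 - 2 * α) := by
        have hq : p ^ 2 = (n : ℝ) ^ (-α * 2) := by
          rw [hp, ← Real.rpow_natCast ((n : ℝ) ^ (-α)) 2, ← Real.rpow_mul hn0.le]
          norm_num
        rw [hq, ← Real.rpow_natCast (n : ℝ) 3, ← Real.rpow_add hn0]
        congr 1
        push_cast
        ring
      rw [heq] at hb
      linarith
    · have h0 : 0 ≤ erProb n p ({G : SimpleGraph (Fin n) | Unmixed G})ᶜ :=
        erProb_nonneg hp0 hp1 _
      linarith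
  have hexp : 3 - 2 * α < 0 := by linarith
  have htend0 : Tendsto (fun n : ℕ => (n : ℝ) ^ (3 - 2 * α)) atTop (nhds 0) := by
    have h := (tendsto_rpow_neg_atTop (by linarith : (0 : ℝ) < 2 * α - 3)).comp
      (tendsto_natCast_atTop_atTop (R := ℝ))
    have hee : (3 - 2 * α) = -(2 * α - 3) := by ring
    rw [hee]
    exact h
  have hlow : Tendsto (fun n : ℕ => 1 - (n : ℝ) ^ (3 - 2 * α)) atTop (nhds 1) := by
    have := tendsto_const_nhds (x := (1 : ℝ)) (f := atTop (α := ℕ)) |>.sub htend0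
    simpa using this
  refine tendsto_of_tendsto_of_tendsto_of_le_of_le' hlow tendsto_const_nhds ?_ ?_
  · filter_upwards [eventually_ge_atTop 1] with n hn
    exact (hkey n hn).1
  · filter_upwards [eventually_ge_atTop 1] with n hn
    exact (hkey n hn).2
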